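/- For a Hoffman graph 𝔥 and a positive real number m, the following conditions are equivalent: (i) 𝔥 has a representation of norm m; (ii) 𝔥 has a reduced representation of norm m; (iii) λ_min(𝔥) ≥ −m. -/

import Mathlib

attribute [local instance] Classical.propDecidable

open scoped RealInnerProductSpace

/-- A Hoffman graph: a graph together with a labeling of its vertices as fat or slim,
such that every fat vertex has a slim neighbor and fat vertices are pairwise nonadjacent. -/
structure HoffmanGraph (V : Type*) where
  graph : SimpleGraph V
  IsFat : V → Prop
  fat_not_adj : ∀ {x y : V}, IsFat x → IsFat y → ¬ graph.Adj x y
  fat_slim_nbr : ∀ {x : V}, IsFat x → ∃ y : V, ¬ IsFat y ∧ graph.Adj x y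

namespace HoffmanGraph

variable {V : Type*}

/-- A vertex is slim if it is not fat. -/
def IsSlim (H : HoffmanGraph V) (x : V) : Prop := ¬ H.IsFat x

/-- The type of slim vertices. -/
abbrev Slim (H : HoffmanGraph V) := {v : V // H.IsSlim v}

/-- The number of fat neighbors of a vertex. -/
noncomputable def fatDeg (H : HoffmanGraph V) (x : V) : ℕ :=
  {f : V | H.IsFat f ∧ H.graph.Adj x f}.ncard

/-- The number of common fat neighbors of two vertices. -/
noncomputable def commonFat (H : HoffmanGraph V) (x y : V) : ℕ :=
  {f : V | H.IsFat f ∧ H.graph.Adj x f ∧ H.graph.Adj y f}.ncard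

lemma commonFat_comm (H : HoffmanGraph V) (x y : V) :
    H.commonFat x y = H.commonFat y x := by
  unfold commonFat
  congr 1
  ext f
  simp only [Set.mem_setOf_eq]
  tauto

/-- A Hoffman graph is fat if every slim vertex has a fat neighbor. -/
def IsFatGraph (H : HoffmanGraph V) : Prop :=
  ∀ x, H.IsSlim x → ∃ f, H.IsFat f ∧ H.graph.Adj x f

/-- A representation of norm `m`. -/
def IsRep (H : HoffmanGraph V) (m : ℝ) {E : Type*} [NormedAddCommGroup E]
    [InnerProductSpace ℝ E] (φ : V → E) : Prop :=
  (∀ x, H.IsSlim x → ⟪φ x, φ x⟫ = m) ∧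
  (∀ x, H.IsFat x → ⟪φ x, φ x⟫ = 1) ∧
  (∀ x y, H.graph.Adj x y → ⟪φ x, φ y⟫ = 1) ∧
  (∀ x y, x ≠ y → ¬ H.graph.Adj x y → ⟪φ x, φ y⟫ = 0)

/-- A reduced representation of norm `m` (only the values on slim vertices matter). -/
def IsReducedRep (H : HoffmanGraph V) (m : ℝ) {E : Type*} [NormedAddCommGroup E]
    [InnerProductSpace ℝ E] (ψ : V → E) : Prop :=
  (∀ x, H.IsSlim x → ⟪ψ x, ψ x⟫ = m - H.fatDeg x) ∧
  (∀ x y, H.IsSlim x → H.IsSlim y → H.graph.Adj x y → ⟪ψ x, ψ y⟫ = 1 - H.commonFat x y) ∧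
  (∀ x y, H.IsSlim x → H.IsSlim y → x ≠ y → ¬ H.graph.Adj x y →
    ⟪ψ x, ψ y⟫ = - (H.commonFat x y : ℝ))

/-- The matrix B(𝔥) = A_s − C Cᵀ, indexed by the slim vertices. -/
noncomputable def matrixB (H : HoffmanGraph V) : Matrix H.Slim H.Slim ℝ :=
  fun x y => (if H.graph.Adj x.1 y.1 then (1 : ℝ) else 0) - (H.commonFat x.1 y.1 : ℝ)

/-- The smallest eigenvalue of a Hoffman graph. -/
noncomputable def lambdaMin (H : HoffmanGraph V) [Fintype V] : ℝ :=
  sInf (spectrum ℝ H.matrixB)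

/-- A subset of the vertices induces a Hoffman graph iff every fat vertex of it retains
a slim neighbor inside it. -/
def IsGoodSubset (H : HoffmanGraph V) (S : Set V) : Prop :=
  ∀ x ∈ S, H.IsFat x → ∃ y ∈ S, ¬ H.IsFat y ∧ H.graph.Adj x y

/-- The induced Hoffman subgraph on a good subset. -/
def induce (H : HoffmanGraph V) (S : Set V) (hS : H.IsGoodSubset S) : HoffmanGraph S where
  graph := H.graph.induce S
  IsFat := fun x => H.IsFat x.1
  fat_not_adj := by
    intro x y hx hy hadj
    exact H.fat_not_adj hx hy hadj
  fat_slim_nbr := by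
    rintro ⟨x, hxS⟩ hx
    obtain ⟨y, hyS, hy, hadj⟩ := hS x hxS hx
    exact ⟨⟨y, hyS⟩, hy, hadj⟩

/-- An (abstract) induced Hoffman subgraph relation between Hoffman graphs. -/
def IsInducedSubgraphOf {V₁ V₂ : Type*} (H₁ : HoffmanGraph V₁) (H₂ : HoffmanGraph V₂) : Prop :=
  ∃ e : V₁ ↪ V₂, (∀ x y, H₂.graph.Adj (e x) (e y) ↔ H₁.graph.Adj x y) ∧
    (∀ x, H₂.IsFat (e x) ↔ H₁.IsFat x)

/-- Isomorphism of Hoffman graphs. -/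
def IsIsoTo {V₁ V₂ : Type*} (H₁ : HoffmanGraph V₁) (H₂ : HoffmanGraph V₂) : Prop :=
  ∃ e : V₁ ≃ V₂, (∀ x y, H₂.graph.Adj (e x) (e y) ↔ H₁.graph.Adj x y) ∧
    (∀ x, H₂.IsFat (e x) ↔ H₁.IsFat x)

/-- `H` is the sum of its induced subgraphs on `W₁` and `W₂`. -/
structure IsSum (H : HoffmanGraph V) (W₁ W₂ : Set V) : Prop where
  nonempty₁ : W₁.Nonempty
  nonempty₂ : W₂.Nonempty
  good₁ : H.IsGoodSubset W₁
  good₂ : H.IsGoodSubset W₂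
  union_eq : W₁ ∪ W₂ = Set.univ
  slim_partition : ∀ v, H.IsSlim v → (v ∈ W₁ ↔ v ∉ W₂)
  fat_closed₁ : ∀ x ∈ W₁, H.IsSlim x → ∀ f, H.IsFat f → H.graph.Adj x f → f ∈ W₁
  fat_closed₂ : ∀ x ∈ W₂, H.IsSlim x → ∀ f, H.IsFat f → H.graph.Adj x f → f ∈ W₂
  common_le : ∀ x ∈ W₁, ∀ y ∈ W₂, H.IsSlim x → H.IsSlim y → H.commonFat x y ≤ 1
  common_iff : ∀ x ∈ W₁, ∀ y ∈ W₂, H.IsSlim x → H.IsSlim y →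
    (H.commonFat x y = 1 ↔ H.graph.Adj x y)

/-- `H` is decomposable if it is the sum of two nonempty induced Hoffman subgraphs. -/
def Decomposable (H : HoffmanGraph V) : Prop := ∃ W₁ W₂ : Set V, H.IsSum W₁ W₂

def Indecomposable (H : HoffmanGraph V) : Prop := ¬ H.Decomposable

/-- `H` is the sum of the family of its induced subgraphs on `W i`. -/
structure IsSumFamily (H : HoffmanGraph V) {n : ℕ} (W : Fin n → Set V) : Prop where
  nonempty : ∀ i, (W i).Nonempty
  good : ∀ i, H.IsGoodSubset (W i)
  union_eq : ⋃ i, W i = Set.univ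
  slim_mem_unique : ∀ v, H.IsSlim v → ∃! i, v ∈ W i
  fat_closed : ∀ i, ∀ x ∈ W i, H.IsSlim x → ∀ f, H.IsFat f → H.graph.Adj x f → f ∈ W i
  common_le : ∀ i j, i ≠ j → ∀ x ∈ W i, ∀ y ∈ W j, H.IsSlim x → H.IsSlim y →
    H.commonFat x y ≤ 1
  common_iff : ∀ i j, i ≠ j → ∀ x ∈ W i, ∀ y ∈ W j, H.IsSlim x → H.IsSlim y →
    (H.commonFat x y = 1 ↔ H.graph.Adj x y)

/-- Attach a new fat vertex (the `none` vertex) adjacent exactly to the slim vertices in `S`. -/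
def attachFat (H : HoffmanGraph V) (S : Set V) (hne : S.Nonempty)
    (hslim : ∀ v ∈ S, H.IsSlim v) : HoffmanGraph (Option V) where
  graph := {
    Adj := fun a b =>
      match a, b with
      | none, none => False
      | none, some v => v ∈ S
      | some v, none => v ∈ S
      | some u, some v => H.graph.Adj u v
    symm := by
      constructor
      rintro (_|u) (_|v) h
      · exact h.elim
      · exact h
      · exact h
      · exact h.symm
    loopless := by
      constructor
      rintro (_|u) h
      · exact h.elim
      · exact H.graph.irrefl h }
  IsFat := fun a => match a with | none => True | some v => H.IsFat v
  fat_not_adj := by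
    rintro (_|u) (_|v) hu hv h
    · exact h.elim
    · exact (hslim v h) hv
    · exact (hslim u h) hu
    · exact H.fat_not_adj hu hv h
  fat_slim_nbr := by
    rintro (_|u) hu
    · obtain ⟨s, hs⟩ := hne
      exact ⟨some s, hslim s hs, hs⟩
    · obtain ⟨y, hy, hadj⟩ := H.fat_slim_nbr hu
      exact ⟨some y, hy, hadj⟩

/-- `H` is `μ`-saturated: it has smallest eigenvalue at least `μ` and no fat vertex can be
attached while keeping the smallest eigenvalue at least `μ`. -/
def IsSaturated (H : HoffmanGraph V) [Fintype V] (μ : ℝ) : Prop :=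
  μ ≤ H.lambdaMin ∧
  ∀ (S : Set V) (hne : S.Nonempty) (hslim : ∀ v ∈ S, H.IsSlim v),
    ¬ (μ ≤ (H.attachFat S hne hslim).lambdaMin)

/-- The special graph `S⁻(𝔥)`: slim vertices, adjacent when the inner product of their
reduced representations is negative. -/
noncomputable def specialMinus (H : HoffmanGraph V) : SimpleGraph H.Slim where
  Adj x y := x ≠ y ∧
    ((H.graph.Adj x.1 y.1 ∧ (1 : ℝ) - (H.commonFat x.1 y.1 : ℝ) < 0) ∨
     (¬ H.graph.Adj x.1 y.1 ∧ -(H.commonFat x.1 y.1 : ℝ) < 0))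
  symm := by
    constructor
    rintro x y ⟨hne, h⟩
    refine ⟨hne.symm, ?_⟩
    rw [H.commonFat_comm y.1 x.1]
    rcases h with ⟨ha, hl⟩ | ⟨ha, hl⟩
    · exact Or.inl ⟨ha.symm, hl⟩
    · exact Or.inr ⟨fun hadj => ha hadj.symm, hl⟩
  loopless := ⟨fun x h => h.1 rfl⟩

/-- The special graph `S⁺(𝔥)`: slim vertices, adjacent when the inner product of their
reduced representations is positive. -/
noncomputable def specialPlus (H : HoffmanGraph V) : SimpleGraph H.Slim where
  Adj x y := x ≠ y ∧
    ((H.graph.Adj x.1 y.1 ∧ 0 < (1 : ℝ) - (H.commonFat x.1 y.1 : ℝ)) ∨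
     (¬ H.graph.Adj x.1 y.1 ∧ 0 < -(H.commonFat x.1 y.1 : ℝ)))
  symm := by
    constructor
    rintro x y ⟨hne, h⟩
    refine ⟨hne.symm, ?_⟩
    rw [H.commonFat_comm y.1 x.1]
    rcases h with ⟨ha, hl⟩ | ⟨ha, hl⟩
    · exact Or.inl ⟨ha.symm, hl⟩
    · exact Or.inr ⟨fun hadj => ha hadj.symm, hl⟩
  loopless := ⟨fun x h => h.1 rfl⟩

/-- The special graph `S(𝔥)`, the union of `S⁻(𝔥)` and `S⁺(𝔥)`. -/
noncomputable def special (H : HoffmanGraph V) : SimpleGraph H.Slim :=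
  H.specialMinus ⊔ H.specialPlus

/-- `⟨S⟩_𝔥`: the set `S` together with all fat neighbors of its members. -/
def closureSet (H : HoffmanGraph V) (S : Set V) : Set V :=
  S ∪ {f | H.IsFat f ∧ ∃ x ∈ S, H.graph.Adj x f}

/-- The Hoffman graph `𝔥^(t)` with one slim vertex (`none`) and `t` fat vertices. -/
def manyFat (t : ℕ) : HoffmanGraph (Option (Fin t)) where
  graph := {
    Adj := fun a b => (a = none ∧ b ≠ none) ∨ (a ≠ none ∧ b = none)
    symm := by
      constructor
      rintro a b (⟨h1, h2⟩ | ⟨h1, h2⟩)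
      · exact Or.inr ⟨h2, h1⟩
      · exact Or.inl ⟨h2, h1⟩
    loopless := by
      constructor
      rintro a (⟨h1, h2⟩ | ⟨h1, h2⟩)
      · exact h2 h1
      · exact h1 h2 }
  IsFat := fun a => a ≠ none
  fat_not_adj := by
    rintro a b ha hb (⟨h1, _⟩ | ⟨_, h1⟩)
    · exact ha h1
    · exact hb h1
  fat_slim_nbr := by
    intro a ha
    refine ⟨none, by simp, Or.inr ⟨ha, rfl⟩⟩

/-- An ordinary (slim) graph regarded as a Hoffman graph. -/
def ofSimple {W : Type*} (G : SimpleGraph W) : HoffmanGraph W where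
  graph := G
  IsFat := fun _ => False
  fat_not_adj := by intro x y hx _ _; exact hx
  fat_slim_nbr := by intro x hx; exact hx.elim

end HoffmanGraph
namespace HoffmanGraph

variable {V : Type*}

/-- The Hoffman graph obtained by replacing the fat vertices `f i` by slim cliques of
sizes `n i`, joining all neighbors of `f i` to all vertices of the `i`-th clique. -/
def blowup {k : ℕ} (H : HoffmanGraph V) (f : Fin k → V) (hf : ∀ i, H.IsFat (f i))
    (n : Fin k → ℕ) :
    HoffmanGraph ({v : V // v ∉ Set.range f} ⊕ (Σ i : Fin k, Fin (n i))) where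
  graph := {
    Adj := fun a b =>
      match a, b with
      | .inl u, .inl v => H.graph.Adj u.1 v.1
      | .inl u, .inr x => H.graph.Adj u.1 (f x.1)
      | .inr x, .inl v => H.graph.Adj (f x.1) v.1
      | .inr x, .inr y => x ≠ y ∧ x.1 = y.1
    symm := by
      constructor
      rintro (u|x) (v|y) h
      · exact h.symm
      · exact h.symm
      · exact h.symm
      · exact ⟨h.1.symm, h.2.symm⟩
    loopless := by
      constructor
      rintro (u|x) h
      · exact H.graph.irrefl h
      · exact h.1 rfl }
  IsFat := fun a => match a with | .inl u => H.IsFat u.1 | .inr _ => False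
  fat_not_adj := by
    rintro (u|x) (v|y) hu hv h
    · exact H.fat_not_adj hu hv h
    · exact hv
    · exact hu
    · exact hu
  fat_slim_nbr := by
    rintro (u|x) hu
    · obtain ⟨y, hy, hadj⟩ := H.fat_slim_nbr hu
      refine ⟨Sum.inl ⟨y, ?_⟩, hy, hadj⟩
      rintro ⟨i, rfl⟩
      exact hy (hf i)
    · exact hu.elim

/-- The slim graph obtained by replacing every fat vertex by a slim `n`-clique,
joining all neighbors of a fat vertex to all vertices of its clique. -/
def blowupAll (H : HoffmanGraph V) (n : ℕ) :
    HoffmanGraph (H.Slim ⊕ ({f : V // H.IsFat f} × Fin n)) where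
  graph := {
    Adj := fun a b =>
      match a, b with
      | .inl u, .inl v => H.graph.Adj u.1 v.1
      | .inl u, .inr x => H.graph.Adj u.1 x.1.1
      | .inr x, .inl v => H.graph.Adj x.1.1 v.1
      | .inr x, .inr y => x ≠ y ∧ x.1 = y.1
    symm := by
      constructor
      rintro (u|x) (v|y) h
      · exact h.symm
      · exact h.symm
      · exact h.symm
      · exact ⟨h.1.symm, h.2.symm⟩
    loopless := by
      constructor
      rintro (u|x) h
      · exact H.graph.irrefl h
      · exact h.1 rfl }
  IsFat := fun _ => False
  fat_not_adj := by intro x y hx _; exact hx.elim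
  fat_slim_nbr := by intro x hx; exact hx.elim

/-- The Hoffman graph of Example 4.2: slim vertices `ℤ/4ℤ` (the `inl`'s), fat vertices
`f_j` for `j ∈ ℤ/4ℤ` (the `inr`'s), with edges `{0,2}`, `{1,3}` and `{i, f_j}` for
`i = j` or `i = j + 1`. -/
def exampleA3tilde : HoffmanGraph (ZMod 4 ⊕ ZMod 4) where
  graph := {
    Adj := fun a b =>
      match a, b with
      | .inl i, .inl j => j = i + 2
      | .inl i, .inr j => i = j ∨ i = j + 1
      | .inr j, .inl i => i = j ∨ i = j + 1
      | .inr _, .inr _ => False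
    symm := by
      constructor
      have h4 : (2 : ZMod 4) + 2 = 0 := by decide
      rintro (i|i) (j|j) h
      · have h' : j = i + 2 := h
        subst h'
        show i = i + 2 + 2
        rw [add_assoc, h4, add_zero]
      · exact h
      · exact h
      · exact h.elim
    loopless := by
      constructor
      rintro (i|i) h
      · exact absurd (left_eq_add.mp h) (by decide)
      · exact h }
  IsFat := fun a => match a with | .inl _ => False | .inr _ => True
  fat_not_adj := by
    rintro (i|i) (j|j) hx hy h
    · exact hx
    · exact hx
    · exact hy
    · exact h
  fat_slim_nbr := by
    rintro (i|i) hx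
    · exact hx.elim
    · exact ⟨Sum.inl i, id, Or.inl rfl⟩

end HoffmanGraph

/-- The extended Dynkin graph `D̃₄`, i.e. the star `K_{1,4}`. -/
def tildeD4Graph : SimpleGraph (Fin 5) := SimpleGraph.fromRel (fun a _ => a = 0)

/-- The Dynkin graph `A_m`: the path on `m` vertices. -/
def dynkinA (m : ℕ) : SimpleGraph (Fin m) :=
  SimpleGraph.fromRel (fun i j => i.1 + 1 = j.1)

/-- The extended Dynkin graph `Ã_m`: the cycle on `m + 1` vertices. -/
def tildeA (m : ℕ) : SimpleGraph (ZMod (m + 1)) :=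
  SimpleGraph.fromRel (fun i j => i + 1 = j)

/-- The Dynkin graph `D_m`: the path `1 - 2 - ⋯ - (m-1)` with the extra vertex `0`
attached to the vertex `2`. -/
def dynkinD (m : ℕ) : SimpleGraph (Fin m) :=
  SimpleGraph.fromRel (fun i j => (1 ≤ i.1 ∧ i.1 + 1 = j.1) ∨ (i.1 = 0 ∧ j.1 = 2))

/-- The extended Dynkin graph `D̃_m` on `m + 1` vertices: the path `1 - 2 - ⋯ - (m-1)`
with the extra vertex `0` attached to `2` and the extra vertex `m` attached to `m - 2`. -/
def tildeD (m : ℕ) : SimpleGraph (Fin (m + 1)) :=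
  SimpleGraph.fromRel (fun i j =>
    (1 ≤ i.1 ∧ i.1 + 1 = j.1 ∧ j.1 ≤ m - 1) ∨ (i.1 = 0 ∧ j.1 = 2) ∨ (i.1 = m ∧ j.1 = m - 2))
section Aux

open Finset Matrix Pointwise

lemma euclid_inner_eq {ι : Type*} [Fintype ι] (x y : EuclideanSpace ℝ ι) :
    ⟪x, y⟫ = ∑ i, x i * y i := by
  simp [PiLp.inner_apply, RCLike.inner_apply]
  exact Finset.sum_congr rfl fun _ _ => mul_comm _ _

lemma herm_spectrum_eq_range {n : Type} [Fintype n] [DecidableEq n]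
    {A : Matrix n n ℝ} (hA : A.IsHermitian) :
    spectrum ℝ A = Set.range hA.eigenvalues := by
  refine Set.Subset.antisymm ?_ ?_
  · have key : spectrum ℝ A
        = spectrum ℝ (Matrix.diagonal (RCLike.ofReal ∘ hA.eigenvalues) : Matrix n n ℝ) := by
      conv_lhs => rw [hA.spectral_theorem]
      rw [Unitary.conjStarAlgAut_apply]
      exact Unitary.spectrum_star_right_conjugate
    rw [key, spectrum_diagonal]
    rintro _ ⟨i, rfl⟩
    exact ⟨i, rfl⟩
  · rintro _ ⟨i, rfl⟩
    exact hA.eigenvalues_mem_spectrum_real i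

lemma posSemidef_add_smul_one_iff {n : Type} [Fintype n] [DecidableEq n]
    {A : Matrix n n ℝ} (hA : A.IsHermitian) {m : ℝ} (hm : 0 < m) :
    (A + m • 1).PosSemidef ↔ -m ≤ sInf (spectrum ℝ A) := by
  have hsm : (m • (1 : Matrix n n ℝ)).IsHermitian := by
    unfold Matrix.IsHermitian
    rw [Matrix.conjTranspose_smul, Matrix.conjTranspose_one]
    simp
  have hA' : (A + m • 1).IsHermitian := hA.add hsm
  have halg : (algebraMap ℝ (Matrix n n ℝ)) m = m • 1 := Algebra.algebraMap_eq_smul_one m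
  have hspec : spectrum ℝ (A + m • 1) = spectrum ℝ A + ({m} : Set ℝ) := by
    rw [← halg, ← spectrum.add_singleton_eq]
  constructor
  · intro hpsd
    rcases Set.eq_empty_or_nonempty (spectrum ℝ A) with he | hne
    · rw [he, Real.sInf_empty]
      linarith
    · apply le_csInf hne
      intro μ hμ
      have hmem : μ + m ∈ spectrum ℝ (A + m • 1) := by
        rw [hspec]
        exact Set.add_mem_add hμ rfl
      rw [herm_spectrum_eq_range hA'] at hmem
      obtain ⟨i, hi⟩ := hmem
      have := hpsd.eigenvalues_nonneg i
      rw [hi] at this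
      linarith
  · intro h
    apply hA'.posSemidef_iff_eigenvalues_nonneg.mpr
    rw [Pi.le_def]
    intro i
    rw [Pi.zero_apply]
    have hmem : hA'.eigenvalues i ∈ spectrum ℝ (A + m • 1) :=
      hA'.eigenvalues_mem_spectrum_real i
    rw [hspec] at hmem
    obtain ⟨μ, hμ, r, hr, hsum⟩ := Set.mem_add.mp hmem
    rw [Set.mem_singleton_iff] at hr
    rw [hr] at hsum
    have hle : sInf (spectrum ℝ A) ≤ μ :=
      csInf_le (A.finite_spectrum.bddBelow) hμ
    have hmu : -m ≤ μ := le_trans h hle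
    linarith [hsum]

end Aux

namespace HoffmanGraph

variable {V : Type} [Fintype V] (H : HoffmanGraph V)

open Finset Matrix

/-- The set of fat neighbors of `x`, as a finset. -/
noncomputable def fatNbrs (x : V) : Finset V :=
  Finset.univ.filter fun f => H.IsFat f ∧ H.graph.Adj x f

lemma fatDeg_eq_card (x : V) : H.fatDeg x = (H.fatNbrs x).card := by
  have h : {f : V | H.IsFat f ∧ H.graph.Adj x f} = ↑(H.fatNbrs x) := by
    ext f; simp [fatNbrs]
  rw [HoffmanGraph.fatDeg, h, Set.ncard_coe_finset]

lemma commonFat_eq_card (x y : V) :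
    H.commonFat x y = ((H.fatNbrs y).filter fun f => H.graph.Adj x f).card := by
  have h : {f : V | H.IsFat f ∧ H.graph.Adj x f ∧ H.graph.Adj y f}
      = ↑((H.fatNbrs y).filter fun f => H.graph.Adj x f) := by
    ext f
    simp only [fatNbrs, Finset.coe_filter, Finset.mem_filter, Finset.mem_univ, true_and,
      Set.mem_setOf_eq]
    tauto
  rw [HoffmanGraph.commonFat, h, Set.ncard_coe_finset]

lemma commonFat_eq_card_inter (x y : V) :
    H.commonFat x y = ((H.fatNbrs x) ∩ (H.fatNbrs y)).card := by
  rw [H.commonFat_eq_card x y]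
  congr 1
  ext f
  simp only [fatNbrs, Finset.mem_filter, Finset.mem_univ, true_and, Finset.mem_inter]
  tauto

lemma commonFat_self (x : V) : H.commonFat x x = H.fatDeg x := by
  rw [H.commonFat_eq_card x x, H.fatDeg_eq_card x]
  congr 1
  ext f
  simp only [fatNbrs, Finset.mem_filter, Finset.mem_univ, true_and]
  tauto

lemma slim_ne_fat {x f : V} (hx : H.IsSlim x) (hf : H.IsFat f) : x ≠ f := by
  rintro rfl; exact hx hf

/-- (i) implies (ii): from a representation we get a reduced representation. -/
lemma isReducedRep_of_isRep {d : ℕ} {φ : V → EuclideanSpace ℝ (Fin d)} {m : ℝ}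
    (h : H.IsRep m φ) :
    H.IsReducedRep m (fun x => φ x - ∑ f ∈ H.fatNbrs x, φ f) := by
  obtain ⟨h1, h2, h3, h4⟩ := h
  have hA : ∀ z w : V, H.IsSlim z →
      ∑ f ∈ H.fatNbrs w, ⟪φ z, φ f⟫ = (H.commonFat z w : ℝ) := by
    intro z w hz
    have step : ∀ f ∈ H.fatNbrs w, ⟪φ z, φ f⟫ = if H.graph.Adj z f then (1 : ℝ) else 0 := by
      intro f hf
      simp only [fatNbrs, mem_filter, mem_univ, true_and] at hf
      by_cases hadj : H.graph.Adj z f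
      · rw [if_pos hadj]; exact h3 z f hadj
      · rw [if_neg hadj]; exact h4 z f (H.slim_ne_fat hz hf.1) hadj
    rw [Finset.sum_congr rfl step, Finset.sum_boole, H.commonFat_eq_card z w]
  have hB : ∀ z w : V,
      ∑ f ∈ H.fatNbrs z, ∑ g ∈ H.fatNbrs w, ⟪φ f, φ g⟫ = (H.commonFat z w : ℝ) := by
    intro z w
    have step : ∀ f ∈ H.fatNbrs z,
        ∑ g ∈ H.fatNbrs w, ⟪φ f, φ g⟫ = if f ∈ H.fatNbrs w then (1 : ℝ) else 0 := by
      intro f hf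
      simp only [fatNbrs, mem_filter, mem_univ, true_and] at hf
      have step2 : ∀ g ∈ H.fatNbrs w, ⟪φ f, φ g⟫ = if f = g then (1 : ℝ) else 0 := by
        intro g hg
        simp only [fatNbrs, mem_filter, mem_univ, true_and] at hg
        by_cases hfg : f = g
        · subst hfg; rw [if_pos rfl]; exact h2 f hf.1
        · rw [if_neg hfg]
          exact h4 f g hfg (H.fat_not_adj hf.1 hg.1)
      rw [Finset.sum_congr rfl step2, Finset.sum_ite_eq]
    rw [Finset.sum_congr rfl step, Finset.sum_boole, H.commonFat_eq_card_inter z w]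
    congr 1
  have key : ∀ x y : V, H.IsSlim x → H.IsSlim y →
      ⟪φ x - ∑ f ∈ H.fatNbrs x, φ f, φ y - ∑ f ∈ H.fatNbrs y, φ f⟫
        = ⟪φ x, φ y⟫ - (H.commonFat x y : ℝ) := by
    intro x y hx hy
    rw [inner_sub_left, inner_sub_right, inner_sub_right, sum_inner, sum_inner, inner_sum]
    have e1 : ∑ f ∈ H.fatNbrs y, ⟪φ x, φ f⟫ = (H.commonFat x y : ℝ) := hA x y hx
    have e2 : ∑ f ∈ H.fatNbrs x, ⟪φ f, φ y⟫ = (H.commonFat x y : ℝ) := by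
      have : ∀ f ∈ H.fatNbrs x, ⟪φ f, φ y⟫ = ⟪φ y, φ f⟫ := fun f _ => real_inner_comm _ _
      rw [Finset.sum_congr rfl this, hA y x hy, H.commonFat_comm y x]
    have e3 : ∑ f ∈ H.fatNbrs x, ∑ g ∈ H.fatNbrs y, ⟪φ f, φ g⟫ = (H.commonFat x y : ℝ) :=
      hB x y
    have e4 : ∑ f ∈ H.fatNbrs x, (∑ g ∈ H.fatNbrs y, ⟪φ f, φ g⟫) =
        ∑ f ∈ H.fatNbrs x, ⟪φ f, ∑ g ∈ H.fatNbrs y, φ g⟫ := by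
      apply Finset.sum_congr rfl
      intro f _
      rw [inner_sum]
    rw [e1, e2, ← e4, e3]
    ring
  refine ⟨?_, ?_, ?_⟩
  · intro x hx
    rw [key x x hx hx, h1 x hx, H.commonFat_self x]
  · intro x y hx hy hadj
    rw [key x y hx hy, h3 x y hadj]
  · intro x y hx hy hne hnadj
    rw [key x y hx hy, h4 x y hne hnadj]
    ring

/-- (ii) implies (i): from a reduced representation we get a representation. -/
lemma exists_isRep_of_isReducedRep {d : ℕ} {ψ : V → EuclideanSpace ℝ (Fin d)} {m : ℝ}
    (h : H.IsReducedRep m ψ) :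
    ∃ (d' : ℕ) (φ : V → EuclideanSpace ℝ (Fin d')), H.IsRep m φ := by
  classical
  obtain ⟨h1, h2, h3⟩ := h
  -- the auxiliary vector in the big space
  set g : V → (Fin d ⊕ V) → ℝ := fun v =>
    Sum.elim (fun j => if H.IsFat v then 0 else ψ v j)
      (fun f => if H.IsFat v then (if v = f then 1 else 0)
        else (if H.IsFat f ∧ H.graph.Adj v f then 1 else 0)) with hg
  set φ₀ : V → EuclideanSpace ℝ (Fin d ⊕ V) := fun v => (WithLp.equiv 2 _).symm (g v) with hφ₀
  have happ : ∀ v i, φ₀ v i = g v i := by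
    intro v i; rfl
  have hinner : ∀ u v : V, ⟪φ₀ u, φ₀ v⟫ =
      (∑ j : Fin d, g u (Sum.inl j) * g v (Sum.inl j)) +
      (∑ f : V, g u (Sum.inr f) * g v (Sum.inr f)) := by
    intro u v
    rw [euclid_inner_eq]
    simp only [happ]
    exact Fintype.sum_sum_type _
  have hrep : H.IsRep m φ₀ := by
    refine ⟨?_, ?_, ?_, ?_⟩
    · intro x hx
      rw [hinner]
      have hxf : ¬ H.IsFat x := hx
      have e1 : ∑ j : Fin d, g x (Sum.inl j) * g x (Sum.inl j) = m - H.fatDeg x := by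
        rw [← h1 x hx, euclid_inner_eq]
        apply Finset.sum_congr rfl
        intro j _
        simp [hg, hxf]
      have e2 : ∑ f : V, g x (Sum.inr f) * g x (Sum.inr f) = (H.fatDeg x : ℝ) := by
        have : ∀ f : V, g x (Sum.inr f) * g x (Sum.inr f)
            = if H.IsFat f ∧ H.graph.Adj x f then (1:ℝ) else 0 := by
          intro f
          by_cases hc : H.IsFat f ∧ H.graph.Adj x f <;> simp [hg, hxf, hc]
        rw [Finset.sum_congr rfl (fun f _ => this f), Finset.sum_boole, H.fatDeg_eq_card]
        rfl
      rw [e1, e2]; ring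
    · intro x hx
      rw [hinner]
      have e1 : ∑ j : Fin d, g x (Sum.inl j) * g x (Sum.inl j) = 0 := by
        apply Finset.sum_eq_zero; intro j _; simp [hg, hx]
      have e2 : ∑ f : V, g x (Sum.inr f) * g x (Sum.inr f) = 1 := by
        have : ∀ f : V, g x (Sum.inr f) * g x (Sum.inr f) = if x = f then (1:ℝ) else 0 := by
          intro f
          by_cases hc : x = f
          · subst hc; simp [hg, hx]
          · simp [hg, hx, hc]
        rw [Finset.sum_congr rfl (fun f _ => this f), Finset.sum_ite_eq]
        simp
      rw [e1, e2]; ring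
    · intro x y hadj
      by_cases hx : H.IsFat x <;> by_cases hy : H.IsFat y
      · exact absurd hadj (H.fat_not_adj hx hy)
      · -- x fat, y slim
        rw [hinner]
        have e1 : ∑ j : Fin d, g x (Sum.inl j) * g y (Sum.inl j) = 0 := by
          apply Finset.sum_eq_zero; intro j _; simp [hg, hx]
        have e2 : ∑ f : V, g x (Sum.inr f) * g y (Sum.inr f) = 1 := by
          have : ∀ f : V, g x (Sum.inr f) * g y (Sum.inr f)
              = if x = f then (if H.IsFat f ∧ H.graph.Adj y f then (1:ℝ) else 0) else 0 := by
            intro f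
            by_cases hc : x = f
            · subst hc; simp [hg, hx, hy]
            · simp [hg, hx, hc]
          rw [Finset.sum_congr rfl (fun f _ => this f), Finset.sum_ite_eq]
          simp [hx, hadj.symm]
        rw [e1, e2]; ring
      · -- x slim, y fat
        rw [hinner]
        have e1 : ∑ j : Fin d, g x (Sum.inl j) * g y (Sum.inl j) = 0 := by
          apply Finset.sum_eq_zero; intro j _; simp [hg, hy]
        have e2 : ∑ f : V, g x (Sum.inr f) * g y (Sum.inr f) = 1 := by
          have : ∀ f : V, g x (Sum.inr f) * g y (Sum.inr f)
              = if y = f then (if H.IsFat f ∧ H.graph.Adj x f then (1:ℝ) else 0) else 0 := by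
            intro f
            by_cases hc : y = f
            · subst hc; simp [hg, hx, hy]
            · simp [hg, hy, hc]
          rw [Finset.sum_congr rfl (fun f _ => this f), Finset.sum_ite_eq]
          simp [hy, hadj]
        rw [e1, e2]; ring
      · -- both slim
        rw [hinner]
        have e1 : ∑ j : Fin d, g x (Sum.inl j) * g y (Sum.inl j)
            = 1 - (H.commonFat x y : ℝ) := by
          rw [← h2 x y hx hy hadj, euclid_inner_eq]
          apply Finset.sum_congr rfl
          intro j _
          simp [hg, hx, hy]
        have e2 : ∑ f : V, g x (Sum.inr f) * g y (Sum.inr f) = (H.commonFat x y : ℝ) := by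
          have : ∀ f : V, g x (Sum.inr f) * g y (Sum.inr f)
              = if H.IsFat f ∧ H.graph.Adj x f ∧ H.graph.Adj y f then (1:ℝ) else 0 := by
            intro f
            by_cases hf : H.IsFat f
            · by_cases ha : H.graph.Adj x f
              · by_cases hb : H.graph.Adj y f
                · simp [hg, hx, hy, hf, ha, hb]
                · simp [hg, hx, hy, hf, ha, hb]
              · simp [hg, hx, hy, hf, ha]
            · simp [hg, hx, hy, hf]
          have hset : (Finset.univ.filter
                fun f => H.IsFat f ∧ H.graph.Adj x f ∧ H.graph.Adj y f)
              = (H.fatNbrs y).filter fun f => H.graph.Adj x f := by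
            ext f
            simp only [fatNbrs, mem_filter, mem_univ, true_and]
            tauto
          rw [Finset.sum_congr rfl (fun f _ => this f), Finset.sum_boole,
            H.commonFat_eq_card, hset]
        rw [e1, e2]; ring
    · intro x y hne hnadj
      by_cases hx : H.IsFat x <;> by_cases hy : H.IsFat y
      · rw [hinner]
        have e1 : ∑ j : Fin d, g x (Sum.inl j) * g y (Sum.inl j) = 0 := by
          apply Finset.sum_eq_zero; intro j _; simp [hg, hx]
        have e2 : ∑ f : V, g x (Sum.inr f) * g y (Sum.inr f) = 0 := by
          apply Finset.sum_eq_zero; intro f _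
          by_cases hc : x = f
          · subst hc; simp [hg, hx, hy, Ne.symm hne]
          · simp [hg, hx, hc]
        rw [e1, e2]; ring
      · rw [hinner]
        have e1 : ∑ j : Fin d, g x (Sum.inl j) * g y (Sum.inl j) = 0 := by
          apply Finset.sum_eq_zero; intro j _; simp [hg, hx]
        have e2 : ∑ f : V, g x (Sum.inr f) * g y (Sum.inr f) = 0 := by
          apply Finset.sum_eq_zero; intro f _
          by_cases hc : x = f
          · subst hc
            have hyx : ¬ H.graph.Adj y x := fun hh => hnadj (H.graph.adj_symm hh)
            simp [hg, hx, hy, hyx]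
          · simp [hg, hx, hc]
        rw [e1, e2]; ring
      · rw [hinner]
        have e1 : ∑ j : Fin d, g x (Sum.inl j) * g y (Sum.inl j) = 0 := by
          apply Finset.sum_eq_zero; intro j _; simp [hg, hy]
        have e2 : ∑ f : V, g x (Sum.inr f) * g y (Sum.inr f) = 0 := by
          apply Finset.sum_eq_zero; intro f _
          by_cases hc : y = f
          · subst hc; simp [hg, hx, hy, hnadj]
          · simp [hg, hy, hc]
        rw [e1, e2]; ring
      · rw [hinner]
        have e1 : ∑ j : Fin d, g x (Sum.inl j) * g y (Sum.inl j)
            = - (H.commonFat x y : ℝ) := by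
          rw [← h3 x y hx hy hne hnadj, euclid_inner_eq]
          apply Finset.sum_congr rfl
          intro j _
          simp [hg, hx, hy]
        have e2 : ∑ f : V, g x (Sum.inr f) * g y (Sum.inr f) = (H.commonFat x y : ℝ) := by
          have : ∀ f : V, g x (Sum.inr f) * g y (Sum.inr f)
              = if H.IsFat f ∧ H.graph.Adj x f ∧ H.graph.Adj y f then (1:ℝ) else 0 := by
            intro f
            by_cases hf : H.IsFat f
            · by_cases ha : H.graph.Adj x f
              · by_cases hb : H.graph.Adj y f
                · simp [hg, hx, hy, hf, ha, hb]
                · simp [hg, hx, hy, hf, ha, hb]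
              · simp [hg, hx, hy, hf, ha]
            · simp [hg, hx, hy, hf]
          have hset : (Finset.univ.filter
                fun f => H.IsFat f ∧ H.graph.Adj x f ∧ H.graph.Adj y f)
              = (H.fatNbrs y).filter fun f => H.graph.Adj x f := by
            ext f
            simp only [fatNbrs, mem_filter, mem_univ, true_and]
            tauto
          rw [Finset.sum_congr rfl (fun f _ => this f), Finset.sum_boole,
            H.commonFat_eq_card, hset]
        rw [e1, e2]; ring
  -- transport along a linear isometry to a `Fin`-indexed Euclidean space
  obtain ⟨hr1, hr2, hr3, hr4⟩ := hrep
  let e : (Fin d ⊕ V) ≃ Fin (d + Fintype.card V) :=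
    (Equiv.sumCongr (Equiv.refl (Fin d)) (Fintype.equivFin V)).trans finSumFinEquiv
  let L := LinearIsometryEquiv.piLpCongrLeft 2 ℝ ℝ e
  refine ⟨d + Fintype.card V, fun v => L (φ₀ v), ?_, ?_, ?_, ?_⟩
  · intro x hx
    rw [LinearIsometryEquiv.inner_map_map]
    exact hr1 x hx
  · intro x hx
    rw [LinearIsometryEquiv.inner_map_map]
    exact hr2 x hx
  · intro x y hadj
    rw [LinearIsometryEquiv.inner_map_map]
    exact hr3 x y hadj
  · intro x y hne hnadj
    rw [LinearIsometryEquiv.inner_map_map]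
    exact hr4 x y hne hnadj

lemma matrixB_isHermitian : H.matrixB.IsHermitian := by
  unfold Matrix.IsHermitian
  ext x y
  simp only [Matrix.conjTranspose_apply, HoffmanGraph.matrixB, star_trivial]
  rw [H.commonFat_comm y.1 x.1]
  congr 1
  simp [H.graph.adj_comm]

/-- The Gram matrix identity: a reduced representation gives
`matrixB + m • 1 = Nᴴ * N`. -/
lemma gram_eq {d : ℕ} {ψ : V → EuclideanSpace ℝ (Fin d)} {m : ℝ}
    (h : H.IsReducedRep m ψ) [DecidableEq H.Slim] :
    H.matrixB + m • (1 : Matrix H.Slim H.Slim ℝ)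
      = (Matrix.of fun (i : Fin d) (x : H.Slim) => ψ x.1 i)ᴴ
        * Matrix.of (fun (i : Fin d) (x : H.Slim) => ψ x.1 i) := by
  obtain ⟨h1, h2, h3⟩ := h
  ext x y
  have hmul : ((Matrix.of fun (i : Fin d) (x : H.Slim) => ψ x.1 i)ᴴ
      * Matrix.of (fun (i : Fin d) (x : H.Slim) => ψ x.1 i)) x y = ⟪ψ x.1, ψ y.1⟫ := by
    rw [euclid_inner_eq, Matrix.mul_apply]
    apply Finset.sum_congr rfl
    intro i _
    simp [Matrix.conjTranspose_apply]
  rw [hmul]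
  rw [Matrix.add_apply, Matrix.smul_apply, Matrix.one_apply]
  by_cases hxy : x = y
  · subst hxy
    rw [if_pos rfl, h1 x.1 x.2]
    have hnadj : ¬ H.graph.Adj x.1 x.1 := H.graph.irrefl
    simp only [HoffmanGraph.matrixB, if_neg hnadj, H.commonFat_self x.1, smul_eq_mul, mul_one]
    ring
  · have hne : x.1 ≠ y.1 := fun hh => hxy (Subtype.ext hh)
    rw [if_neg hxy]
    simp only [HoffmanGraph.matrixB, smul_eq_mul, mul_zero]
    by_cases hadj : H.graph.Adj x.1 y.1
    · rw [if_pos hadj, h2 x.1 y.1 x.2 y.2 hadj]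
      ring
    · rw [if_neg hadj, h3 x.1 y.1 x.2 y.2 hne hadj]
      ring

/-- (ii) implies (iii). -/
lemma lambdaMin_ge_of_isReducedRep {d : ℕ} {ψ : V → EuclideanSpace ℝ (Fin d)} {m : ℝ}
    (hm : 0 < m) (h : H.IsReducedRep m ψ) : -m ≤ H.lambdaMin := by
  classical
  have hpsd : (H.matrixB + m • (1 : Matrix H.Slim H.Slim ℝ)).PosSemidef := by
    rw [H.gram_eq h]
    exact Matrix.posSemidef_conjTranspose_mul_self _
  exact (posSemidef_add_smul_one_iff H.matrixB_isHermitian hm).mp hpsd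

/-- (iii) implies (ii). -/
lemma exists_isReducedRep_of_lambdaMin_ge {m : ℝ} (hm : 0 < m) (h : -m ≤ H.lambdaMin) :
    ∃ (d : ℕ) (ψ : V → EuclideanSpace ℝ (Fin d)), H.IsReducedRep m ψ := by
  classical
  have hpsd : (H.matrixB + m • (1 : Matrix H.Slim H.Slim ℝ)).PosSemidef :=
    (posSemidef_add_smul_one_iff H.matrixB_isHermitian hm).mpr h
  open scoped MatrixOrder in
  obtain ⟨N, hN⟩ := CStarAlgebra.nonneg_iff_eq_star_mul_self.mp hpsd.nonneg
  set d := Fintype.card H.Slim with hd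
  let e : H.Slim ≃ Fin d := Fintype.equivFin H.Slim
  let ψ : V → EuclideanSpace ℝ (Fin d) := fun v =>
    if hv : H.IsSlim v then (WithLp.equiv 2 _).symm (fun i => N (e.symm i) ⟨v, hv⟩) else 0
  have hinner : ∀ (x y : V) (hx : H.IsSlim x) (hy : H.IsSlim y),
      ⟪ψ x, ψ y⟫ = (H.matrixB + m • (1 : Matrix H.Slim H.Slim ℝ)) ⟨x, hx⟩ ⟨y, hy⟩ := by
    intro x y hx hy
    have hx' : ψ x = (WithLp.equiv 2 _).symm (fun i => N (e.symm i) ⟨x, hx⟩) := dif_pos hx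
    have hy' : ψ y = (WithLp.equiv 2 _).symm (fun i => N (e.symm i) ⟨y, hy⟩) := dif_pos hy
    rw [hx', hy', euclid_inner_eq, hN, Matrix.mul_apply]
    simp only [WithLp.equiv_symm_apply, PiLp.toLp_apply, Matrix.star_apply, star_trivial]
    exact Equiv.sum_comp e.symm (fun s => N s ⟨x, hx⟩ * N s ⟨y, hy⟩)
  refine ⟨d, ψ, ?_, ?_, ?_⟩
  · intro x hx
    rw [hinner x x hx hx]
    have hnadj : ¬ H.graph.Adj x x := H.graph.irrefl
    simp only [Matrix.add_apply, Matrix.smul_apply, Matrix.one_apply_eq,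
      HoffmanGraph.matrixB, if_neg hnadj, H.commonFat_self x, smul_eq_mul, mul_one]
    ring
  · intro x y hx hy hadj
    rw [hinner x y hx hy]
    have hne : (⟨x, hx⟩ : H.Slim) ≠ ⟨y, hy⟩ := by
      intro hh
      exact H.graph.ne_of_adj hadj (congrArg Subtype.val hh)
    simp only [Matrix.add_apply, Matrix.smul_apply, Matrix.one_apply_ne hne,
      HoffmanGraph.matrixB, if_pos hadj, smul_eq_mul, mul_zero]
    ring
  · intro x y hx hy hne hnadj
    rw [hinner x y hx hy]
    have hne' : (⟨x, hx⟩ : H.Slim) ≠ ⟨y, hy⟩ := by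
      intro hh
      exact hne (congrArg Subtype.val hh)
    simp only [Matrix.add_apply, Matrix.smul_apply, Matrix.one_apply_ne hne',
      HoffmanGraph.matrixB, if_neg hnadj, smul_eq_mul, mul_zero]
    ring

end HoffmanGraph
/-- Theorem 2.8: for a Hoffman graph `𝔥` and a positive real `m`, the following are
equivalent: (i) `𝔥` has a representation of norm `m`; (ii) `𝔥` has a reduced
representation of norm `m`; (iii) `λ_min(𝔥) ≥ -m`. -/
theorem representation_iff_reduced_representation_iff_lambdaMin_ge
    {V : Type} [Fintype V] (H : HoffmanGraph V) (m : ℝ) (hm : 0 < m) :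
    ((∃ (d : ℕ) (φ : V → EuclideanSpace ℝ (Fin d)), H.IsRep m φ) ↔
      (∃ (d : ℕ) (ψ : V → EuclideanSpace ℝ (Fin d)), H.IsReducedRep m ψ)) ∧
    ((∃ (d : ℕ) (ψ : V → EuclideanSpace ℝ (Fin d)), H.IsReducedRep m ψ) ↔
      -m ≤ H.lambdaMin) := by
  constructor
  · constructor
    · rintro ⟨d, φ, hφ⟩
      exact ⟨d, _, H.isReducedRep_of_isRep hφ⟩
    · rintro ⟨d, ψ, hψ⟩
      exact H.exists_isRep_of_isReducedRep hψ
  · constructor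
    · rintro ⟨d, ψ, hψ⟩
      exact H.lambdaMin_ge_of_isReducedRep hm hψ
    · intro h
      exact H.exists_isReducedRep_of_lambdaMin_ge hm h
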